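/- The set of possible arrival times generated by BFS expansion of an RDD is finite: given a finite graph G = (V,E) with positive edge durations δ : E → ℝ_{>0}, a finite set W ⊆ ℝ of permitted wait-until times, a start vertex s, and a bound μ_max, the set of reachable time-stamped nodes {(v,t) : t ≤ μ_max} generated by the rules (s,0) is reachable; if (u,t) is reachable and {u,v} ∈ E and t + δ(u,v) ≤ μ_max then (v, t + δ(u,v)) is reachable; if (u,t) is reachable and τ ∈ W with t < τ ≤ μ_max then (u,τ) is reachable — is finite. -/
import Mathlib


/-- Reachability of time-stamped nodes in the RDD built by BFS expansion. -/
inductive RDDReach {V : Type*} (E : V → V → Prop) (δ : V → V → ℝ) (W : Set ℝ)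
    (s : V) (μmax : ℝ) : V → ℝ → Prop
  | start : RDDReach E δ W s μmax s 0
  | move : ∀ u v t, RDDReach E δ W s μmax u t → E u v → t + δ u v ≤ μmax →
      RDDReach E δ W s μmax v (t + δ u v)
  | wait : ∀ u t τ, RDDReach E δ W s μmax u t → τ ∈ W → t < τ → τ ≤ μmax →
      RDDReach E δ W s μmax u τ

/-- Times generatable with at most `n` move steps. -/
def rddTimes {V : Type*} (δ : V → V → ℝ) (W : Set ℝ) : ℕ → Set ℝ
  | 0 => insert 0 W
  | n + 1 => rddTimes δ W n ∪
      (fun p : ℝ × V × V => p.1 + δ p.2.1 p.2.2) '' ((rddTimes δ W n) ×ˢ Set.univ)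

lemma rddTimes_finite {V : Type*} [Finite V] (δ : V → V → ℝ) (W : Set ℝ)
    (hW : W.Finite) : ∀ n, (rddTimes δ W n).Finite
  | 0 => hW.insert 0
  | n + 1 => ((rddTimes_finite δ W hW n)).union
      (((rddTimes_finite δ W hW n).prod Set.finite_univ).image _)

lemma rddTimes_mono {V : Type*} (δ : V → V → ℝ) (W : Set ℝ) {n m : ℕ} (h : n ≤ m) :
    rddTimes δ W n ⊆ rddTimes δ W m := by
  induction h with
  | refl => exact fun _ h => h
  | step _ ih => exact fun x hx => Or.inl (ih hx)

theorem rdd_reachable_finite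
    {V : Type*} [Finite V] (E : V → V → Prop) (δ : V → V → ℝ) (W : Set ℝ)
    (s : V) (μmax : ℝ)
    (hδ : ∀ u v, E u v → 0 < δ u v) (hW : W.Finite) :
    {p : V × ℝ | RDDReach E δ W s μmax p.1 p.2}.Finite := by
  classical
  set D : Set ℝ := {x | (∃ u v, δ u v = x) ∧ 0 < x} with hD
  have hDfin : (insert (1 : ℝ) D).Finite := by
    apply Set.Finite.insert
    have : D ⊆ Set.range (fun p : V × V => δ p.1 p.2) := by
      rintro x ⟨⟨u, v, rfl⟩, -⟩
      exact ⟨(u, v), rfl⟩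
    exact (Set.finite_range _).subset this
  have hne : (insert (1 : ℝ) D).Nonempty := ⟨1, Or.inl rfl⟩
  set c : ℝ := sInf (insert (1 : ℝ) D) with hc
  have hcmem : c ∈ insert (1 : ℝ) D := hne.csInf_mem hDfin
  have hcpos : 0 < c := by
    rcases hcmem with h | h
    · rw [h]; norm_num
    · exact h.2
  have hcle : ∀ x ∈ D, c ≤ x := fun x hx =>
    csInf_le hDfin.bddBelow (Or.inr hx)
  -- key claim
  have key : ∀ v t, RDDReach E δ W s μmax v t →
      ∃ k : ℕ, t ∈ rddTimes δ W k ∧ (k : ℝ) * c ≤ t := by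
    intro v t h
    induction h with
    | start => exact ⟨0, Or.inl rfl, by simp⟩
    | move u v t _ hE hle ih =>
        obtain ⟨k, hk, hkc⟩ := ih
        refine ⟨k + 1, Or.inr ⟨(t, u, v), ⟨hk, trivial⟩, rfl⟩, ?_⟩
        have : c ≤ δ u v := hcle _ ⟨⟨u, v, rfl⟩, hδ u v hE⟩
        push_cast
        nlinarith
    | wait u t τ _ hτW htτ hτle ih =>
        obtain ⟨k, hk, hkc⟩ := ih
        exact ⟨0, Or.inr hτW, by
          simp only [Nat.cast_zero, zero_mul]
          have : (0 : ℝ) ≤ (k : ℝ) * c := by positivity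
          linarith⟩
  set N : ℕ := ⌈μmax / c⌉₊ with hN
  have hsub : {p : V × ℝ | RDDReach E δ W s μmax p.1 p.2} ⊆
      Set.univ ×ˢ rddTimes δ W N := by
    rintro ⟨v, t⟩ hp
    obtain ⟨k, hk, hkc⟩ := key v t hp
    have hgen : ∀ w r, RDDReach E δ W s μmax w r → r ≤ μmax ∨ r = 0 := by
      intro w r hr
      cases hr with
      | start => exact Or.inr rfl
      | move _ _ _ _ _ hle => exact Or.inl hle
      | wait _ _ _ _ _ _ hle => exact Or.inl hle
    have htle := hgen v t hp
    have hkN : k ≤ N := by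
      rcases htle with hle | rfl
      · have h1 : (k : ℝ) ≤ μmax / c := by
          rw [le_div_iff₀ hcpos]; linarith
        have h2 : (k : ℝ) ≤ (N : ℝ) := h1.trans (Nat.le_ceil _)
        exact_mod_cast h2
      · have : (k : ℝ) * c ≤ 0 := hkc
        have hk0 : k = 0 := by
          by_contra h
          have : (0:ℝ) < (k:ℝ) * c := by
            have : 0 < (k:ℝ) := by exact_mod_cast Nat.pos_of_ne_zero h
            positivity
          linarith
        simp [hk0]
    exact ⟨trivial, rddTimes_mono δ W hkN hk⟩
  exact (Set.finite_univ.prod (rddTimes_finite δ W hW N)).subset hsub
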